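/- For every p ∈ (0,1) with q = 1−p and every integer n ≥ 1, the average empirical entropy satisfies the two-sided bound −1/n ≤ Σ_{|w|=n} Pr(w)·F(w) − H(p) ≤ 0. -/

import Mathlib

open Finset Real

noncomputable section

/-- Weight (number of 1-bits) of a binary word. -/
def bwt {n : ℕ} (w : Fin n → Bool) : ℕ := (Finset.univ.filter fun i => w i = true).card

/-- Probability of a binary word under a memoryless source with parameter `p`. -/
def prW (p : ℝ) {n : ℕ} (w : Fin n → Bool) : ℝ := p ^ bwt w * (1 - p) ^ (n - bwt w)

/-- Binary entropy (natural logarithm). -/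
def Hent (p : ℝ) : ℝ := -(p * Real.log p) - (1 - p) * Real.log (1 - p)

/-- Empirical entropy of a binary word (the convention `0 * log 0 = 0` holds
automatically since `Real.log 0 = 0`). -/
def Femp {n : ℕ} (w : Fin n → Bool) : ℝ :=
  -((bwt w : ℝ) / n) * Real.log ((bwt w : ℝ) / n)
    - (((n : ℝ) - bwt w) / n) * Real.log (((n : ℝ) - bwt w) / n)

lemma card_bwt_eq (n k : ℕ) :
    ((univ : Finset (Fin n → Bool)).filter fun w => bwt w = k).card = n.choose k := by
  have h : n.choose k = ((univ : Finset (Fin n)).card).choose k := by simp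
  rw [h, ← Finset.card_powersetCard]
  refine Finset.card_bij' (fun w _ => univ.filter fun i => w i = true)
    (fun s _ => fun i => decide (i ∈ s)) ?_ ?_ ?_ ?_
  · intro w hw
    simp only [Finset.mem_filter, Finset.mem_univ, true_and] at hw
    simp [Finset.mem_powersetCard, bwt] at hw ⊢
    exact hw
  · intro s hs
    simp only [Finset.mem_powersetCard] at hs
    simp only [Finset.mem_filter, Finset.mem_univ, true_and]
    rw [← hs.2]
    simp [bwt]
  · intro w hw; funext i; simp
  · intro s hs; ext i; simp

lemma word_sum_eq (p : ℝ) (n : ℕ) (f : ℕ → ℝ) :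
    ∑ w : Fin n → Bool, (p ^ bwt w * (1 - p) ^ (n - bwt w)) * f (bwt w)
      = ∑ k ∈ Finset.range (n + 1),
          (n.choose k : ℝ) * (p ^ k * (1 - p) ^ (n - k)) * f k := by
  have hmap : ∀ w : Fin n → Bool, w ∈ (univ : Finset (Fin n → Bool)) →
      bwt w ∈ Finset.range (n + 1) := by
    intro w _
    have : bwt w ≤ n := by
      simpa [bwt] using (Finset.card_filter_le (univ : Finset (Fin n)) _).trans_eq (by simp)
    simpa [Finset.mem_range, Nat.lt_succ_iff] using this
  rw [← Finset.sum_fiberwise_of_maps_to hmap]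
  refine Finset.sum_congr rfl fun k _ => ?_
  have : ∀ w ∈ (univ : Finset (Fin n → Bool)).filter (fun w => bwt w = k),
      (p ^ bwt w * (1 - p) ^ (n - bwt w)) * f (bwt w)
        = (p ^ k * (1 - p) ^ (n - k)) * f k := by
    intro w hw
    simp only [Finset.mem_filter] at hw
    rw [hw.2]
  rw [Finset.sum_congr rfl this, Finset.sum_const, card_bwt_eq n k, nsmul_eq_mul]
  ring

lemma bern_eval (p : ℝ) (n ν : ℕ) :
    Polynomial.eval p (bernsteinPolynomial ℝ n ν)
      = (n.choose ν : ℝ) * (p ^ ν * (1 - p) ^ (n - ν)) := by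
  simp [bernsteinPolynomial, mul_assoc]

lemma M0 (p : ℝ) (n : ℕ) :
    ∑ k ∈ Finset.range (n + 1), (n.choose k : ℝ) * (p ^ k * (1 - p) ^ (n - k)) = 1 := by
  have := congrArg (Polynomial.eval p) (bernsteinPolynomial.sum ℝ n)
  simpa [Polynomial.eval_finset_sum, bern_eval] using this

lemma M1 (p : ℝ) (n : ℕ) :
    ∑ k ∈ Finset.range (n + 1), (k : ℝ) * ((n.choose k : ℝ) * (p ^ k * (1 - p) ^ (n - k)))
      = n * p := by
  have := congrArg (Polynomial.eval p) (bernsteinPolynomial.sum_smul ℝ n)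
  simpa [Polynomial.eval_finset_sum, bern_eval, mul_comm, mul_assoc, mul_left_comm] using this

lemma M2 (p : ℝ) (n : ℕ) (hn : 1 ≤ n) :
    ∑ k ∈ Finset.range (n + 1), (k : ℝ)^2 * ((n.choose k : ℝ) * (p ^ k * (1 - p) ^ (n - k)))
      = n * (n - 1) * p^2 + n * p := by
  have h2 := congrArg (Polynomial.eval p) (bernsteinPolynomial.sum_mul_smul ℝ n)
  simp only [Polynomial.eval_finset_sum, Polynomial.eval_smul, bern_eval, smul_eq_mul,
    Polynomial.eval_pow, Polynomial.eval_X] at h2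
  have key : ∑ k ∈ Finset.range (n + 1),
      ((k * (k-1) : ℕ) : ℝ) * ((n.choose k : ℝ) * (p ^ k * (1 - p) ^ (n - k)))
      = ((n * (n-1) : ℕ) : ℝ) * p ^ 2 := by
    simpa [mul_comm, mul_assoc, mul_left_comm] using h2
  have cast1 : ∀ k : ℕ, ((k * (k-1) : ℕ) : ℝ) = (k:ℝ)^2 - (k:ℝ) := by
    intro k
    cases k with
    | zero => simp
    | succ m => push_cast [Nat.succ_sub_one]; ring
  have cast2 : ((n * (n-1) : ℕ) : ℝ) = (n:ℝ) * ((n:ℝ) - 1) := by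
    push_cast [Nat.cast_sub hn]; ring
  rw [cast2] at key
  simp only [cast1, sub_mul] at key
  rw [Finset.sum_sub_distrib] at key
  have := M1 p n
  nlinarith [key, this]

lemma alog_low {a b : ℝ} (ha : 0 ≤ a) (hb : 0 < b) : a - b ≤ a * Real.log (a / b) := by
  rcases eq_or_lt_of_le ha with h | h
  · simp [← h]; linarith
  · have h1 : Real.log (b / a) ≤ b / a - 1 := Real.log_le_sub_one_of_pos (by positivity)
    have h2 : Real.log (b / a) = - Real.log (a / b) := by
      rw [← Real.log_inv]; congr 1; field_simp
    rw [h2] at h1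
    have := mul_le_mul_of_nonneg_left (by linarith : 1 - b / a ≤ Real.log (a / b)) ha
    calc a - b = a * (1 - b / a) := by field_simp
    _ ≤ a * Real.log (a / b) := this

lemma alog_up {a b : ℝ} (ha : 0 ≤ a) (hb : 0 < b) : a * Real.log (a / b) ≤ a ^ 2 / b - a := by
  rcases eq_or_lt_of_le ha with h | h
  · simp [← h]
  · have h1 : Real.log (a / b) ≤ a / b - 1 := Real.log_le_sub_one_of_pos (by positivity)
    have := mul_le_mul_of_nonneg_left h1 ha
    calc a * Real.log (a / b) ≤ a * (a / b - 1) := this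
    _ = a ^ 2 / b - a := by field_simp

lemma perk (p : ℝ) (hp0 : 0 < p) (hp1 : p < 1) (n k : ℕ) (hk : k ≤ n) (hn : 1 ≤ n) :
    (n:ℝ) * (-((k:ℝ)/n) * Real.log ((k:ℝ)/n) - (((n:ℝ)-k)/n) * Real.log (((n:ℝ)-k)/n))
      = -(k:ℝ) * Real.log p - ((n:ℝ)-k) * Real.log (1-p)
        - ((k:ℝ) * Real.log ((k:ℝ)/((n:ℝ)*p))
            + ((n:ℝ)-k) * Real.log (((n:ℝ)-k)/((n:ℝ)*(1-p)))) := by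
  have hn0 : (0:ℝ) < n := by exact_mod_cast hn
  have h1 : (k:ℝ) * Real.log ((k:ℝ)/((n:ℝ)*p))
      = (k:ℝ) * Real.log ((k:ℝ)/n) - (k:ℝ) * Real.log p := by
    rcases Nat.eq_zero_or_pos k with hk0 | hk0
    · simp [hk0]
    · have hkR : (0:ℝ) < k := by exact_mod_cast hk0
      have : (k:ℝ)/((n:ℝ)*p) = ((k:ℝ)/n)/p := by
        rw [div_div]
      rw [this, Real.log_div (by positivity) (ne_of_gt hp0)]
      ring
  have h2 : ((n:ℝ)-k) * Real.log (((n:ℝ)-k)/((n:ℝ)*(1-p)))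
      = ((n:ℝ)-k) * Real.log (((n:ℝ)-k)/n) - ((n:ℝ)-k) * Real.log (1-p) := by
    rcases eq_or_lt_of_le hk with hkn | hkn
    · simp [hkn]
    · have hkR : (0:ℝ) < (n:ℝ) - k := by
        have : (k:ℝ) < n := by exact_mod_cast hkn
        linarith
      have : ((n:ℝ)-k)/((n:ℝ)*(1-p)) = (((n:ℝ)-k)/n)/(1-p) := by
        rw [div_div]
      rw [this, Real.log_div (by positivity) (by linarith)]
      ring
  have hL : ∀ A B : ℝ, (n:ℝ) * (-((k:ℝ)/n) * A - (((n:ℝ)-k)/n) * B)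
      = -(k:ℝ)*A - ((n:ℝ)-k)*B := by
    intro A B
    field_simp
  rw [hL, h1, h2]
  ring

/-- Krichevsky: two-sided bound for the average empirical entropy:
`−1/n ≤ Σ_{|w|=n} Pr(w)F(w) − H(p) ≤ 0`. -/
theorem stmt_14 (p q : ℝ) (hp : p ∈ Set.Ioo (0 : ℝ) 1) (hq : q = 1 - p)
    (n : ℕ) (hn : 1 ≤ n) :
    -(1 / (n : ℝ)) ≤ (∑ w : Fin n → Bool, prW p w * Femp w) - Hent p ∧
      (∑ w : Fin n → Bool, prW p w * Femp w) - Hent p ≤ 0 := by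
  obtain ⟨hp0, hp1⟩ := hp
  have hn0 : (0:ℝ) < n := by exact_mod_cast hn
  have hq0 : (0:ℝ) < 1 - p := by linarith
  set B : ℕ → ℝ := fun k => (n.choose k : ℝ) * (p ^ k * (1 - p) ^ (n - k)) with hB
  set fe : ℕ → ℝ := fun k => -((k:ℝ)/n) * Real.log ((k:ℝ)/n)
      - (((n:ℝ)-(k:ℝ))/n) * Real.log (((n:ℝ)-(k:ℝ))/n) with hfe
  set G : ℕ → ℝ := fun k => (k:ℝ) * Real.log ((k:ℝ)/((n:ℝ)*p))
      + ((n:ℝ)-(k:ℝ)) * Real.log (((n:ℝ)-(k:ℝ))/((n:ℝ)*(1-p))) with hG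
  have hword : ∑ w : Fin n → Bool, prW p w * Femp w
      = ∑ k ∈ Finset.range (n+1), B k * fe k := by
    have := word_sum_eq p n fe
    simpa [prW, Femp, hB, hfe, mul_comm, mul_assoc, mul_left_comm] using this
  set S := ∑ k ∈ Finset.range (n+1), B k * G k with hSdef
  have hBnn : ∀ k, 0 ≤ B k := by
    intro k
    have : (0:ℝ) ≤ p := le_of_lt hp0
    positivity
  -- main identity
  have hmain : (n:ℝ) * ∑ k ∈ Finset.range (n+1), B k * fe k = (n:ℝ) * Hent p - S := by
    rw [Finset.mul_sum]
    have step : ∀ k ∈ Finset.range (n+1), (n:ℝ) * (B k * fe k)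
        = (Real.log (1-p) - Real.log p) * ((k:ℝ) * B k)
            + (-(n:ℝ) * Real.log (1-p)) * B k - B k * G k := by
      intro k hk
      have hkn : k ≤ n := Nat.lt_succ_iff.mp (Finset.mem_range.mp hk)
      have hperk := perk p hp0 hp1 n k hkn hn
      have : (n:ℝ) * (B k * fe k) = B k * ((n:ℝ) * fe k) := by ring
      rw [this, hfe, hperk]
      simp only [hG]
      ring
    rw [Finset.sum_congr rfl step, Finset.sum_sub_distrib, Finset.sum_add_distrib,
      ← Finset.mul_sum, ← Finset.mul_sum, M1 p n, M0 p n, ← hSdef]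
    simp only [Hent]
    ring
  -- lower bound for S
  have hS0 : 0 ≤ S := by
    refine Finset.sum_nonneg fun k hk => ?_
    have hkn : k ≤ n := Nat.lt_succ_iff.mp (Finset.mem_range.mp hk)
    have hkR : (k:ℝ) ≤ n := by exact_mod_cast hkn
    have h1 := alog_low (a := (k:ℝ)) (b := (n:ℝ)*p) (Nat.cast_nonneg k) (by positivity)
    have h2 := alog_low (a := (n:ℝ)-(k:ℝ)) (b := (n:ℝ)*(1-p)) (by linarith) (by positivity)
    have hGnn : 0 ≤ G k := by
      simp only [hG]
      nlinarith
    exact mul_nonneg (hBnn k) hGnn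
  -- upper bound for S
  have hS1 : S ≤ 1 := by
    have hstep : S ≤ ∑ k ∈ Finset.range (n+1),
        ((1/((n:ℝ)*p)) * ((k:ℝ)^2 * B k)
          + (1/((n:ℝ)*(1-p))) * ((n:ℝ)^2 * B k - 2*(n:ℝ)*((k:ℝ)*B k) + (k:ℝ)^2 * B k)
          - (n:ℝ) * B k) := by
      refine Finset.sum_le_sum fun k hk => ?_
      have hkn : k ≤ n := Nat.lt_succ_iff.mp (Finset.mem_range.mp hk)
      have hkR : (k:ℝ) ≤ n := by exact_mod_cast hkn
      have h1 := alog_up (a := (k:ℝ)) (b := (n:ℝ)*p) (Nat.cast_nonneg k) (by positivity)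
      have h2 := alog_up (a := (n:ℝ)-(k:ℝ)) (b := (n:ℝ)*(1-p)) (by linarith) (by positivity)
      have hGup : G k ≤ (k:ℝ)^2/((n:ℝ)*p) - (k:ℝ)
          + ((n:ℝ)-(k:ℝ))^2/((n:ℝ)*(1-p)) - ((n:ℝ)-(k:ℝ)) := by
        simp only [hG]; linarith
      have := mul_le_mul_of_nonneg_left hGup (hBnn k)
      refine this.trans (le_of_eq ?_)
      field_simp
      ring
    have hsum : ∑ k ∈ Finset.range (n+1),
        ((1/((n:ℝ)*p)) * ((k:ℝ)^2 * B k)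
          + (1/((n:ℝ)*(1-p))) * ((n:ℝ)^2 * B k - 2*(n:ℝ)*((k:ℝ)*B k) + (k:ℝ)^2 * B k)
          - (n:ℝ) * B k) = 1 := by
      rw [Finset.sum_sub_distrib, Finset.sum_add_distrib, ← Finset.mul_sum, ← Finset.mul_sum,
        ← Finset.mul_sum]
      have hM0 := M0 p n
      have hM1 := M1 p n
      have hM2 := M2 p n hn
      have hmid : ∑ k ∈ Finset.range (n+1),
          ((n:ℝ)^2 * B k - 2*(n:ℝ)*((k:ℝ)*B k) + (k:ℝ)^2 * B k)
          = (n:ℝ)^2 * 1 - 2*(n:ℝ)*((n:ℝ)*p) + ((n:ℝ)*((n:ℝ)-1)*p^2 + (n:ℝ)*p) := by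
        rw [Finset.sum_add_distrib, Finset.sum_sub_distrib, ← Finset.mul_sum, ← Finset.mul_sum]
        rw [hM0, hM1, hM2]
      rw [hmid, hM0, hM2]
      field_simp
      ring
    linarith [hstep]
  -- conclude
  have hEq : (∑ w : Fin n → Bool, prW p w * Femp w) - Hent p = -(S / n) := by
    rw [hword]
    have : ∑ k ∈ Finset.range (n+1), B k * fe k = Hent p - S / n := by
      field_simp at hmain ⊢
      linarith [hmain]
    rw [this]
    ring
  rw [hEq]
  constructor
  · have : S / n ≤ 1 / n := by
      apply div_le_div_of_nonneg_right hS1 hn0.le |>.trans_eq rfl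
    linarith
  · have : 0 ≤ S / n := div_nonneg hS0 (le_of_lt hn0)
    linarith

end
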